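/- Complement-pair Rao–Blackwell optimality: Let q be a probability mass function on 2^[n] with q(S) + q(Sᶜ) > 0 whenever ρ(S) ≠ 0, and let r : 2^[n] → ℝ. Suppose (γ₁, γ₂) with γ₁, γ₂ : 2^[n] × 2^[n] → ℝ satisfies the feasibility constraint q(S)γ₁(S,Sᶜ) + q(Sᶜ)γ₂(Sᶜ,S) = ρ(S) for all S ⊆ [n]. Define the canonical weighting γ₁*(S,Sᶜ) = ρ(S)/(q(S)+q(Sᶜ)) and γ₂*(S,Sᶜ) = ρ(Sᶜ)/(q(S)+q(Sᶜ)). Then for S ∼ q, Var_q[γ₁*(S,Sᶜ)r(S) + γ₂*(S,Sᶜ)r(Sᶜ)] ≤ Var_q[γ₁(S,Sᶜ)r(S) + γ₂(S,Sᶜ)r(Sᶜ)]. -/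
import Mathlib


open Finset

/-- Expectation under a pmf on a finite type. -/
noncomputable def pexp {Ω : Type*} [Fintype Ω] (q : Ω → ℝ) (f : Ω → ℝ) : ℝ :=
  ∑ ω : Ω, q ω * f ω

/-- Variance under a pmf on a finite type. -/
noncomputable def pvar {Ω : Type*} [Fintype Ω] (q : Ω → ℝ) (f : Ω → ℝ) : ℝ :=
  pexp q (fun ω => (f ω - pexp q f) ^ 2)

lemma pvar_eq {Ω : Type*} [Fintype Ω] (q f : Ω → ℝ) (hq1 : ∑ ω : Ω, q ω = 1) :
    pvar q f = pexp q (fun ω => f ω ^ 2) - (pexp q f) ^ 2 := by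
  simp only [pvar, pexp]
  have h : ∀ ω : Ω, q ω * (f ω - ∑ x : Ω, q x * f x) ^ 2
      = q ω * f ω ^ 2 - 2 * (∑ x : Ω, q x * f x) * (q ω * f ω)
        + (∑ x : Ω, q x * f x) ^ 2 * q ω := by
    intro ω; ring
  rw [Finset.sum_congr rfl (fun ω _ => h ω), Finset.sum_add_distrib,
    Finset.sum_sub_distrib, ← Finset.mul_sum, ← Finset.mul_sum, hq1]
  ring

/-- Rao–Blackwell optimality of the canonical complement-pair weighting. -/
theorem complement_pair_rao_blackwell (n : ℕ)
    (q ρ r : Finset (Fin n) → ℝ)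
    (hq0 : ∀ S, 0 ≤ q S) (hq1 : ∑ S : Finset (Fin n), q S = 1)
    (hsupp : ∀ S, ρ S ≠ 0 → 0 < q S + q Sᶜ)
    (γ₁ γ₂ : Finset (Fin n) → Finset (Fin n) → ℝ)
    (hfeas : ∀ S : Finset (Fin n), q S * γ₁ S Sᶜ + q Sᶜ * γ₂ Sᶜ S = ρ S)
    (γ₁s γ₂s : Finset (Fin n) → Finset (Fin n) → ℝ)
    (hγ₁s : ∀ S : Finset (Fin n), γ₁s S Sᶜ = ρ S / (q S + q Sᶜ))
    (hγ₂s : ∀ S : Finset (Fin n), γ₂s S Sᶜ = ρ Sᶜ / (q S + q Sᶜ)) :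
    pvar q (fun S => γ₁s S Sᶜ * r S + γ₂s S Sᶜ * r Sᶜ)
      ≤ pvar q (fun S => γ₁ S Sᶜ * r S + γ₂ S Sᶜ * r Sᶜ) := by
  set F : Finset (Fin n) → ℝ := fun S => γ₁ S Sᶜ * r S + γ₂ S Sᶜ * r Sᶜ with hF
  set G : Finset (Fin n) → ℝ := fun S => γ₁s S Sᶜ * r S + γ₂s S Sᶜ * r Sᶜ with hG
  -- reindexing along the complement involution
  have compl_sum : ∀ h : Finset (Fin n) → ℝ,
      (∑ S : Finset (Fin n), h Sᶜ) = ∑ S : Finset (Fin n), h S := by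
    intro h
    exact Fintype.sum_bijective compl
      (Function.Involutive.bijective (fun S => compl_compl S)) _ _ (fun S => rfl)
  -- zero cases on degenerate pairs
  have hzero : ∀ S : Finset (Fin n), q S + q Sᶜ = 0 → ρ S = 0 ∧ ρ Sᶜ = 0 := by
    intro S h
    constructor
    · by_contra hc; exact absurd h (ne_of_gt (hsupp S hc))
    · by_contra hc
      have := hsupp Sᶜ hc
      rw [compl_compl] at this
      linarith
  -- pair identity for F
  have keyF : ∀ S : Finset (Fin n),
      q S * F S + q Sᶜ * F Sᶜ = ρ S * r S + ρ Sᶜ * r Sᶜ := by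
    intro S
    have h1 := hfeas S
    have h2 := hfeas Sᶜ
    rw [compl_compl] at h2
    simp only [hF, compl_compl]
    linear_combination r S * h1 + r Sᶜ * h2
  -- pair identity for G
  have keyG : ∀ S : Finset (Fin n),
      (q S + q Sᶜ) * G S = ρ S * r S + ρ Sᶜ * r Sᶜ := by
    intro S
    simp only [hG, hγ₁s S, hγ₂s S]
    by_cases h : q S + q Sᶜ = 0
    · obtain ⟨h1, h2⟩ := hzero S h
      simp [h, h1, h2]
    · field_simp
  -- symmetry of G
  have Gsymm : ∀ S : Finset (Fin n), G Sᶜ = G S := by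
    intro S
    have h1 := hγ₁s Sᶜ
    have h2 := hγ₂s Sᶜ
    rw [compl_compl] at h1 h2
    simp only [hG, compl_compl, h1, h2, hγ₁s S, hγ₂s S]
    rw [add_comm (q Sᶜ) (q S)]
    ring
  -- combined pair relation
  have keyFG : ∀ S : Finset (Fin n),
      (q S + q Sᶜ) * G S = q S * F S + q Sᶜ * F Sᶜ := by
    intro S; rw [keyG S, keyF S]
  -- equal means
  have meanF : 2 * pexp q F = 2 * ∑ S : Finset (Fin n), ρ S * r S := by
    have hre : (∑ S : Finset (Fin n), q Sᶜ * F Sᶜ) = ∑ S : Finset (Fin n), q S * F S :=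
      compl_sum (fun S => q S * F S)
    have hre2 : (∑ S : Finset (Fin n), ρ Sᶜ * r Sᶜ) = ∑ S : Finset (Fin n), ρ S * r S :=
      compl_sum (fun S => ρ S * r S)
    calc 2 * pexp q F = ∑ S : Finset (Fin n), (q S * F S + q Sᶜ * F Sᶜ) := by
          rw [Finset.sum_add_distrib, hre]; simp only [pexp]; ring
      _ = ∑ S : Finset (Fin n), (ρ S * r S + ρ Sᶜ * r Sᶜ) :=
          Finset.sum_congr rfl (fun S _ => keyF S)
      _ = 2 * ∑ S : Finset (Fin n), ρ S * r S := by
          rw [Finset.sum_add_distrib, hre2]; ring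
  have meanG : 2 * pexp q G = 2 * ∑ S : Finset (Fin n), ρ S * r S := by
    have hre : (∑ S : Finset (Fin n), q Sᶜ * G Sᶜ) = ∑ S : Finset (Fin n), q S * G S :=
      compl_sum (fun S => q S * G S)
    have hre2 : (∑ S : Finset (Fin n), ρ Sᶜ * r Sᶜ) = ∑ S : Finset (Fin n), ρ S * r S :=
      compl_sum (fun S => ρ S * r S)
    calc 2 * pexp q G = ∑ S : Finset (Fin n), (q S * G S + q Sᶜ * G Sᶜ) := by
          rw [Finset.sum_add_distrib, hre]; simp only [pexp]; ring
      _ = ∑ S : Finset (Fin n), (ρ S * r S + ρ Sᶜ * r Sᶜ) := by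
          refine Finset.sum_congr rfl (fun S _ => ?_)
          rw [Gsymm S, ← keyG S]; ring
      _ = 2 * ∑ S : Finset (Fin n), ρ S * r S := by
          rw [Finset.sum_add_distrib, hre2]; ring
  have hmean : pexp q G = pexp q F := by linarith
  -- second moment comparison
  have hsq : pexp q (fun S => G S ^ 2) ≤ pexp q (fun S => F S ^ 2) := by
    have h2G : 2 * pexp q (fun S => G S ^ 2)
        = ∑ S : Finset (Fin n), (q S + q Sᶜ) * G S ^ 2 := by
      have hre : (∑ S : Finset (Fin n), q Sᶜ * G Sᶜ ^ 2)
          = ∑ S : Finset (Fin n), q S * G S ^ 2 := compl_sum (fun S => q S * G S ^ 2)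
      calc 2 * pexp q (fun S => G S ^ 2)
          = ∑ S : Finset (Fin n), (q S * G S ^ 2 + q Sᶜ * G Sᶜ ^ 2) := by
            rw [Finset.sum_add_distrib, hre]; simp only [pexp]; ring
        _ = ∑ S : Finset (Fin n), (q S + q Sᶜ) * G S ^ 2 := by
            refine Finset.sum_congr rfl (fun S _ => ?_)
            rw [Gsymm S]; ring
    have h2F : 2 * pexp q (fun S => F S ^ 2)
        = ∑ S : Finset (Fin n), (q S * F S ^ 2 + q Sᶜ * F Sᶜ ^ 2) := by
      have hre : (∑ S : Finset (Fin n), q Sᶜ * F Sᶜ ^ 2)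
          = ∑ S : Finset (Fin n), q S * F S ^ 2 := compl_sum (fun S => q S * F S ^ 2)
      rw [Finset.sum_add_distrib, hre]; simp only [pexp]; ring
    have hpt : ∀ S ∈ (Finset.univ : Finset (Finset (Fin n))),
        (q S + q Sᶜ) * G S ^ 2 ≤ q S * F S ^ 2 + q Sᶜ * F Sᶜ ^ 2 := by
      intro S _
      have hk := keyFG S
      have hk2 : (q S + q Sᶜ) * G S * G S = (q S * F S + q Sᶜ * F Sᶜ) * G S := by
        rw [hk]
      nlinarith [mul_nonneg (hq0 S) (sq_nonneg (F S - G S)),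
        mul_nonneg (hq0 Sᶜ) (sq_nonneg (F Sᶜ - G S)), hk2]
    have := Finset.sum_le_sum hpt
    linarith
  rw [pvar_eq q G hq1, pvar_eq q F hq1, hmean]
  linarith
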